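/- arXiv:1602.07585 — 6 statements merged into one kernel-verified Lean document; each statement's English description precedes it below -/
import Mathlib

section
/- Let k be a field, let n > m be natural numbers, and suppose that for every subset I of {1,...,n} with |I| = m we are given a nonzero vector v_I in k^n whose projection onto the coordinate subspace spanned by the coordinates in I is zero (i.e., (v_I)_i = 0 for all i in I). Then the k-linear span of the vectors {v_I : I ⊆ {1,...,n}, |I| = m} has dimension at least m + 1. -/
theorem stmt_0 (k : Type*) [Field k] (n m : ℕ) (hnm : m < n)
    (v : {I : Finset (Fin n) // I.card = m} → (Fin n → k))
    (hv0 : ∀ I, v I ≠ 0)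
    (hvI : ∀ I, ∀ i ∈ I.1, v I i = 0) :
    m + 1 ≤ Module.finrank k (Submodule.span k (Set.range v)) := by
  classical
  -- step: for any finset S with at most m elements, find a vector in the range
  -- vanishing on S but nonzero at some coordinate outside S
  have step : ∀ S : Finset (Fin n), S.card ≤ m →
      ∃ (I : {I : Finset (Fin n) // I.card = m}) (jx : Fin n),
        v I jx ≠ 0 ∧ S ⊆ I.1 := by
    intro S hS
    obtain ⟨u, hSu, -, hu⟩ := Finset.exists_subsuperset_card_eq (Finset.subset_univ S)
      hS (by simpa using hnm.le)
    refine ⟨⟨u, hu⟩, ?_⟩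
    obtain ⟨jx, hjx⟩ := Function.ne_iff.mp (hv0 ⟨u, hu⟩)
    exact ⟨jx, by simpa using hjx, hSu⟩
  -- build a triangular system of vectors by recursion
  have key : ∀ t : ℕ, t ≤ m + 1 →
      ∃ (j : ℕ → Fin n) (w : ℕ → Fin n → k),
        ∀ s < t, w s ∈ Set.range v ∧ w s (j s) ≠ 0 ∧ ∀ s' < s, w s (j s') = 0 := by
    intro t
    induction t with
    | zero => intro _; exact ⟨fun _ => ⟨0, by omega⟩, fun _ _ => 0, by omega⟩
    | succ t ih =>
      intro ht
      obtain ⟨j, w, hjw⟩ := ih (by omega)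
      set S : Finset (Fin n) := (Finset.range t).image j with hSdef
      have hScard : S.card ≤ m := by
        calc S.card ≤ (Finset.range t).card := Finset.card_image_le
          _ = t := Finset.card_range t
          _ ≤ m := by omega
      obtain ⟨I, jx, hIx, hSI⟩ := step S hScard
      refine ⟨fun s => if s = t then jx else j s,
              fun s => if s = t then v I else w s, ?_⟩
      intro s hs
      rcases Nat.lt_succ_iff_lt_or_eq.mp hs with hs | rfl
      · have hsw := hjw s hs
        have hne : s ≠ t := by omega
        simp only [hne, if_false]
        refine ⟨hsw.1, hsw.2.1, ?_⟩
        intro s' hs'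
        have : s' ≠ t := by omega
        simp only [this, if_false]
        exact hsw.2.2 s' hs'
      · simp only [if_pos rfl]
        refine ⟨Set.mem_range_self I, hIx, ?_⟩
        intro s' hs'
        have : s' ≠ s := by omega
        simp only [this, if_false]
        exact hvI I (j s') (hSI (Finset.mem_image_of_mem j (Finset.mem_range.mpr hs')))
  obtain ⟨j, w, hjw⟩ := key (m + 1) le_rfl
  -- the vectors w 0, ..., w m are linearly independent
  set W : Fin (m + 1) → Fin n → k := fun s => w s with hW
  have hWind : LinearIndependent k W := by
    rw [Fintype.linearIndependent_iff]
    intro g hg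
    by_contra hcon
    push_neg at hcon
    set T : Finset (Fin (m + 1)) := Finset.univ.filter (fun s => g s ≠ 0) with hT
    have hTne : T.Nonempty := by
      obtain ⟨s, hs⟩ := hcon
      exact ⟨s, by simp [hT, hs]⟩
    set s₀ := T.min' hTne with hs₀
    have hs₀T : s₀ ∈ T := T.min'_mem hTne
    have hgs₀ : g s₀ ≠ 0 := by simpa [hT] using hs₀T
    have heval := congrFun hg (j s₀)
    have hsum : (∑ i, g i • W i) (j s₀) = ∑ i, g i * W i (j s₀) := by
      simp [Finset.sum_apply]
    rw [hsum] at heval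
    have hsingle : ∑ i, g i * W i (j s₀) = g s₀ * W s₀ (j s₀) := by
      apply Finset.sum_eq_single s₀
      · intro i _ hne
        rcases lt_or_gt_of_ne hne with hlt | hgt
        · have : g i = 0 := by
            by_contra hgi
            have : i ∈ T := by simp [hT, hgi]
            exact absurd (T.min'_le i this) (by omega)
          simp [this]
        · have : W i (j s₀) = 0 :=
            (hjw i (i.isLt)).2.2 s₀ hgt
          simp [this]
      · intro h; exact absurd (Finset.mem_univ s₀) h
    rw [hsingle] at heval
    have hWs₀ : W s₀ (j s₀) ≠ 0 := (hjw s₀ s₀.isLt).2.1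
    rcases (by simpa using heval : g s₀ = 0 ∨ W s₀ (j s₀) = 0) with h | h
    · exact hgs₀ h
    · exact hWs₀ h
  -- push into the span
  have hmem : ∀ s : Fin (m + 1), W s ∈ Submodule.span k (Set.range v) :=
    fun s => Submodule.subset_span (hjw s s.isLt).1
  set W' : Fin (m + 1) → (Submodule.span k (Set.range v)) := fun s => ⟨W s, hmem s⟩ with hW'
  have hW'ind : LinearIndependent k W' := by
    apply LinearIndependent.of_comp (Submodule.span k (Set.range v)).subtype
    convert hWind
    rfl
  haveI : Module.Finite k (Submodule.span k (Set.range v)) :=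
    FiniteDimensional.span_of_finite k (Set.finite_range v)
  have := hW'ind.fintype_card_le_finrank
  simpa using this
end

section
/- Let A be an r × n integer matrix with n > r whose associated linear map Z^n → Z^r is surjective. Then the lattice ker_Z(A) ⊆ Z^n is generated, as an abelian group, by its elements having at most r + 1 nonzero entries. -/
open Finset Module

variable {r n : ℕ}

def Ksub (A : Matrix (Fin r) (Fin n) ℤ) (T : Finset (Fin n)) : Submodule ℤ (Fin n → ℤ) where
  carrier := {x | A.mulVec x = 0 ∧ ∀ i ∉ T, x i = 0}
  add_mem' := by
    rintro x y ⟨hx1, hx2⟩ ⟨hy1, hy2⟩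
    refine ⟨by rw [Matrix.mulVec_add, hx1, hy1, add_zero], fun i hi => ?_⟩
    simp [hx2 i hi, hy2 i hi]
  zero_mem' := ⟨Matrix.mulVec_zero A, fun i _ => rfl⟩
  smul_mem' := by
    rintro c x ⟨hx1, hx2⟩
    refine ⟨?_, fun i hi => ?_⟩
    · rw [Matrix.mulVec_smul, hx1, smul_zero]
    · simp [hx2 i hi]

lemma Ksub_sat {A : Matrix (Fin r) (Fin n) ℤ} {T : Finset (Fin n)} {x : Fin n → ℤ} {c : ℤ}
    (hc : c ≠ 0) (h : c • x ∈ Ksub A T) : x ∈ Ksub A T := by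
  obtain ⟨h1, h2⟩ := h
  rw [Matrix.mulVec_smul] at h1
  refine ⟨funext fun j => ?_, fun i hi => ?_⟩
  · have := congrFun h1 j
    simp only [Pi.smul_apply, smul_eq_mul, Pi.zero_apply] at this ⊢
    rcases mul_eq_zero.1 this with h | h
    · exact absurd h hc
    · exact h
  · have := h2 i hi
    simp only [Pi.smul_apply, smul_eq_mul, mul_eq_zero] at this
    tauto

lemma Ksub_erase_le {A : Matrix (Fin r) (Fin n) ℤ} {T : Finset (Fin n)} {i : Fin n} :
    Ksub A (T.erase i) ≤ Ksub A T := by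
  rintro x ⟨h1, h2⟩
  exact ⟨h1, fun j hj => h2 j (fun hm => hj (Finset.mem_of_mem_erase hm))⟩

lemma Ksub_split (A : Matrix (Fin r) (Fin n) ℤ) (T : Finset (Fin n)) (i : Fin n) :
    ∃ u ∈ Ksub A T, ∀ k ∈ Ksub A T, ∃ c : ℤ, k - c • u ∈ Ksub A (T.erase i) := by
  set I : Submodule ℤ ℤ := Submodule.map (LinearMap.proj i) (Ksub A T) with hI
  have hprin : I.IsPrincipal := inferInstance
  set d : ℤ := Submodule.IsPrincipal.generator I with hd
  have hdmem : d ∈ I := Submodule.IsPrincipal.generator_mem I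
  obtain ⟨u, hu, hui⟩ := hdmem
  refine ⟨u, hu, fun k hk => ?_⟩
  have hki : k i ∈ I := ⟨k, hk, rfl⟩
  rw [← Submodule.IsPrincipal.span_singleton_generator I] at hki
  rw [Submodule.mem_span_singleton] at hki
  obtain ⟨c, hc⟩ := hki
  refine ⟨c, ?_, fun j hj => ?_⟩
  · have h1 := (hk : _ ∈ Ksub A T).1
    have h2 := (hu : _ ∈ Ksub A T).1
    rw [Matrix.mulVec_sub, Matrix.mulVec_smul, h1, h2, smul_zero, sub_zero]
  · by_cases hji : j = i
    · subst hji
      simp only [Pi.sub_apply, Pi.smul_apply, smul_eq_mul]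
      have huj : u j = Submodule.IsPrincipal.generator I := hui
      rw [← hc, huj]
      simp [smul_eq_mul]
    · have hjT : j ∉ T := fun hmem => hj (Finset.mem_erase.2 ⟨hji, hmem⟩)
      have := (hk : _ ∈ Ksub A T).2 j hjT
      have := (hu : _ ∈ Ksub A T).2 j hjT
      simp_all

def extQ (T : Finset (Fin n)) : ((i : ↥T) → ℚ) →ₗ[ℚ] (Fin n → ℚ) where
  toFun x i := if h : i ∈ T then x ⟨i, h⟩ else 0
  map_add' x y := by funext i; by_cases h : i ∈ T <;> simp [h]
  map_smul' c x := by funext i; by_cases h : i ∈ T <;> simp [h]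

lemma pair_minor {a b : Fin n → ℚ} (h : LinearIndependent ℚ ![a, b]) :
    ∃ i j, a i * b j - a j * b i ≠ 0 := by
  by_contra hall
  push_neg at hall
  rcases eq_or_ne a 0 with ha | ha
  · rw [LinearIndependent.pair_iff] at h
    have := (h 1 0 (by simp [ha])).1
    norm_num at this
  · obtain ⟨i, hi⟩ : ∃ i, a i ≠ 0 := by
      by_contra h0; push_neg at h0; exact ha (funext h0)
    rw [LinearIndependent.pair_iff] at h
    have h2 := h (b i / a i) (-1) ?_
    · norm_num at h2
    · funext j
      have hm := hall i j
      simp only [Pi.add_apply, Pi.smul_apply, smul_eq_mul, Pi.zero_apply, neg_one_mul]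
      field_simp
      linarith [hall i j]

lemma Ksub_pair (A : Matrix (Fin r) (Fin n) ℤ) (T : Finset (Fin n)) (hT : r + 2 ≤ T.card) :
    ∃ a b, a ∈ Ksub A T ∧ b ∈ Ksub A T ∧ ∃ i j, a i * b j - a j * b i ≠ 0 := by
  classical
  set Aq : Matrix (Fin r) (Fin n) ℚ := A.map (Int.cast : ℤ → ℚ) with hAq
  set ψ : ((i : ↥T) → ℚ) →ₗ[ℚ] (Fin r → ℚ) := Aq.mulVecLin.comp (extQ T) with hψ
  have hker : 2 ≤ finrank ℚ (LinearMap.ker ψ) := by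
    have h1 : finrank ℚ ((i : ↥T) → ℚ) = T.card := by
      rw [Module.finrank_pi]; exact Fintype.card_coe T
    have h2 := LinearMap.finrank_range_add_finrank_ker ψ
    have h3 : finrank ℚ (LinearMap.range ψ) ≤ r := by
      refine le_trans (Submodule.finrank_le _) ?_
      simp [Module.finrank_pi]
    omega
  set d := finrank ℚ (LinearMap.ker ψ) with hd
  set B := Module.finBasis ℚ (LinearMap.ker ψ) with hB
  set i0 : Fin d := ⟨0, by omega⟩
  set i1 : Fin d := ⟨1, by omega⟩
  set a0 : Fin n → ℚ := extQ T (B i0) with ha0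
  set b0 : Fin n → ℚ := extQ T (B i1) with hb0
  have hEinj : Function.Injective (extQ T) := by
    intro x y hxy
    funext i
    have := congrFun hxy i.1
    simpa [extQ, i.2] using this
  have hli : LinearIndependent ℚ ![a0, b0] := by
    have hg : Function.Injective (![i0, i1] : Fin 2 → Fin d) := by
      intro s t hst
      fin_cases s <;> fin_cases t <;> simp_all [i0, i1, Fin.ext_iff]
    have h1 := (B.linearIndependent.comp ![i0, i1] hg)
    have h2 := h1.map' ((extQ T).comp (LinearMap.ker ψ).subtype) ?_
    · convert h2 using 1
      funext t
      fin_cases t <;> rfl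
      rfl
      rfl
    · rw [LinearMap.ker_eq_bot]
      exact hEinj.comp (Submodule.injective_subtype _)
  obtain ⟨i, j, hmin⟩ := pair_minor hli
  -- clear denominators
  have key : ∀ x0 : Fin n → ℚ, (∃ z : LinearMap.ker ψ, extQ T z = x0) →
      ∃ (N : ℤ) (x : Fin n → ℤ), N ≠ 0 ∧ x ∈ Ksub A T ∧ ∀ i, (x i : ℚ) = (N : ℚ) * x0 i := by
    rintro x0 ⟨z, hz⟩
    set N : ℤ := ∏ i, ((x0 i).den : ℤ) with hN
    have hNne : N ≠ 0 := by
      rw [hN]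
      exact Finset.prod_ne_zero_iff.2 fun i _ => Int.natCast_ne_zero.2 (x0 i).den_nz
    have hcoord : ∀ i, ∃ zi : ℤ, (zi : ℚ) = (N : ℚ) * x0 i := by
      intro i
      have hdvd : ((x0 i).den : ℤ) ∣ N := Finset.dvd_prod_of_mem _ (Finset.mem_univ i)
      obtain ⟨k, hk⟩ := hdvd
      refine ⟨(x0 i).num * k, ?_⟩
      push_cast
      rw [hk]
      push_cast
      rw [← Rat.mul_den_eq_num]
      ring
    choose x hx using hcoord
    refine ⟨N, x, hNne, ⟨?_, ?_⟩, hx⟩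
    · -- A.mulVec x = 0
      have hker0 : Aq.mulVec x0 = 0 := by
        rw [← hz]
        exact z.2
      funext j'
      have : ((A.mulVec x j' : ℤ) : ℚ) = (N : ℚ) * (Aq.mulVec x0 j') := by
        simp only [Matrix.mulVec, dotProduct, hAq, Matrix.map_apply]
        push_cast
        rw [Finset.mul_sum]
        refine Finset.sum_congr rfl fun i' _ => ?_
        rw [hx i']
        ring
      rw [hker0] at this
      simp only [Pi.zero_apply, mul_zero] at this
      exact_mod_cast this
    · -- support
      intro i' hi'
      have : (x i' : ℚ) = 0 := by
        rw [hx i', ← hz]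
        simp [extQ, hi']
      exact_mod_cast this
  obtain ⟨Na, a, hNa, haK, ha⟩ := key a0 ⟨B i0, rfl⟩
  obtain ⟨Nb, b, hNb, hbK, hb⟩ := key b0 ⟨B i1, rfl⟩
  refine ⟨a, b, haK, hbK, i, j, ?_⟩
  have : ((a i * b j - a j * b i : ℤ) : ℚ) = (Na : ℚ) * Nb * (a0 i * b0 j - a0 j * b0 i) := by
    push_cast
    rw [ha i, ha j, hb i, hb j]
    ring
  intro hzero
  rw [hzero] at this
  simp only [Int.cast_zero] at this
  have := this.symm
  rcases mul_eq_zero.1 this with h | h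
  · rcases mul_eq_zero.1 h with h' | h'
    · exact hNa (by exact_mod_cast h')
    · exact hNb (by exact_mod_cast h')
  · exact hmin h

def redp (p : ℕ) : (Fin n → ℤ) →ₗ[ℤ] (Fin n → ZMod p) where
  toFun x i := (x i : ZMod p)
  map_add' x y := by funext i; push_cast; simp
  map_smul' c x := by
    funext i
    simp only [Pi.smul_apply, smul_eq_mul, RingHom.id_apply]
    push_cast
    rw [zsmul_eq_mul]

lemma redp_cast_smul (p : ℕ) (c : ℤ) (x : Fin n → ZMod p) :
    c • x = ((c : ZMod p)) • x := by
  funext i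
  simp [zsmul_eq_mul]

lemma descend (A : Matrix (Fin r) (Fin n) ℤ) (T : Finset (Fin n)) (p : ℕ) [hp : Fact p.Prime] :
    ∀ g : ℕ, ∀ a b : Fin n → ℤ, a ∈ Ksub A T → b ∈ Ksub A T →
    ∀ i j : Fin n, (a i * b j - a j * b i) ≠ 0 → (a i * b j - a j * b i).natAbs ≤ g →
    ∃ x y, x ∈ Ksub A T ∧ y ∈ Ksub A T ∧
      LinearIndependent (ZMod p) ![redp p x, redp p y] := by
  intro g
  induction g with
  | zero =>
    intro a b _ _ i j hne hle
    exact absurd (Int.natAbs_eq_zero.1 (Nat.le_zero.1 hle)) hne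
  | succ g ih =>
    intro a b haK hbK i j hne hle
    by_cases hli : LinearIndependent (ZMod p) ![redp p a, redp p b]
    · exact ⟨a, b, haK, hbK, hli⟩
    rw [LinearIndependent.pair_iff] at hli
    push_neg at hli
    obtain ⟨s, t, hst, hne2⟩ := hli
    have hppos : (0:ℤ) < (p:ℤ) := by exact_mod_cast hp.1.pos
    set α : ℤ := (s.val : ℤ) with hα
    set β : ℤ := (t.val : ℤ) with hβ
    have hαs : ((α : ℤ) : ZMod p) = s := by
      rw [hα]; push_cast; simp [ZMod.natCast_val, ZMod.cast_id]
    have hβt : ((β : ℤ) : ZMod p) = t := by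
      rw [hβ]; push_cast; simp [ZMod.natCast_val, ZMod.cast_id]
    set c : Fin n → ℤ := α • a + β • b with hc
    have hcK : c ∈ Ksub A T := (Ksub A T).add_mem ((Ksub A T).smul_mem α haK)
      ((Ksub A T).smul_mem β hbK)
    have hcred : redp p c = 0 := by
      rw [hc, map_add, map_smul, map_smul, redp_cast_smul, redp_cast_smul, hαs, hβt, hst]
    have hdvd : ∀ i', (p:ℤ) ∣ c i' := by
      intro i'
      have := congrFun hcred i'
      rwa [← ZMod.intCast_zmod_eq_zero_iff_dvd]
    set c' : Fin n → ℤ := fun i' => c i' / (p:ℤ) with hc'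
    have hcc' : c = (p:ℤ) • c' := by
      funext i'
      simp only [Pi.smul_apply, smul_eq_mul, hc']
      rw [Int.mul_ediv_cancel' (hdvd i')]
    have hc'K : c' ∈ Ksub A T := Ksub_sat (by positivity) (hcc' ▸ hcK)
    -- minor identities
    have hval_lt_s : s.val < p := ZMod.val_lt s
    have hval_lt_t : t.val < p := ZMod.val_lt t
    by_cases ht : t = 0
    · -- then s ≠ 0, use pair (c', b)
      have hs : s ≠ 0 := fun h0 => hne2 h0 ht
      have hα0 : α ≠ 0 := by
        simp only [hα, ne_eq, Int.natCast_eq_zero]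
        intro h0
        exact hs (by rwa [← ZMod.val_eq_zero])
      have hmin : (p:ℤ) * (c' i * b j - c' j * b i) = α * (a i * b j - a j * b i) := by
        have h1 : c i = (p:ℤ) * c' i := by rw [hcc']; rfl
        have h2 : c j = (p:ℤ) * c' j := by rw [hcc']; rfl
        have h3 : c i = α * a i + β * b i := rfl
        have h4 : c j = α * a j + β * b j := rfl
        have hβ0 : β = 0 := by simp [hβ, ht]
        have h5 : (p:ℤ) * c' i = α * a i + β * b i := by rw [← h1]; exact h3
        have h6 : (p:ℤ) * c' j = α * a j + β * b j := by rw [← h2]; exact h4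
        rw [hβ0] at h5 h6
        linear_combination b j * h5 - b i * h6
      have hm'ne : c' i * b j - c' j * b i ≠ 0 := by
        intro h0
        rw [h0, mul_zero] at hmin
        rcases mul_eq_zero.1 hmin.symm with h | h
        · exact hα0 h
        · exact hne h
      have hm'le : (c' i * b j - c' j * b i).natAbs ≤ g := by
        have heq : p * (c' i * b j - c' j * b i).natAbs = α.natAbs * (a i * b j - a j * b i).natAbs := by
          have := congrArg Int.natAbs hmin
          rwa [Int.natAbs_mul, Int.natAbs_mul, Int.natAbs_natCast] at this
        have hαlt : α.natAbs < p := by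
          simp only [hα, Int.natAbs_natCast]
          exact hval_lt_s
        have h1 : (c' i * b j - c' j * b i).natAbs ≠ 0 := fun h0 =>
          hm'ne (Int.natAbs_eq_zero.1 h0)
        have h2 : (a i * b j - a j * b i).natAbs ≠ 0 := fun h0 =>
          hne (Int.natAbs_eq_zero.1 h0)
        nlinarith [heq, hαlt, hle, Nat.pos_of_ne_zero h1, Nat.pos_of_ne_zero h2]
      exact ih c' b hc'K hbK i j hm'ne hm'le
    · -- t ≠ 0, use pair (a, c')
      have hβ0 : β ≠ 0 := by
        simp only [hβ, ne_eq, Int.natCast_eq_zero]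
        intro h0
        exact ht (by rwa [← ZMod.val_eq_zero])
      have hmin : (p:ℤ) * (a i * c' j - a j * c' i) = β * (a i * b j - a j * b i) := by
        have h1 : c i = (p:ℤ) * c' i := by rw [hcc']; rfl
        have h2 : c j = (p:ℤ) * c' j := by rw [hcc']; rfl
        have h3 : c i = α * a i + β * b i := rfl
        have h4 : c j = α * a j + β * b j := rfl
        have h5 : (p:ℤ) * c' i = α * a i + β * b i := by rw [← h1]; exact h3
        have h6 : (p:ℤ) * c' j = α * a j + β * b j := by rw [← h2]; exact h4
        linear_combination a i * h6 - a j * h5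
      have hm'ne : a i * c' j - a j * c' i ≠ 0 := by
        intro h0
        rw [h0, mul_zero] at hmin
        rcases mul_eq_zero.1 hmin.symm with h | h
        · exact hβ0 h
        · exact hne h
      have hm'le : (a i * c' j - a j * c' i).natAbs ≤ g := by
        have heq : p * (a i * c' j - a j * c' i).natAbs = β.natAbs * (a i * b j - a j * b i).natAbs := by
          have := congrArg Int.natAbs hmin
          rwa [Int.natAbs_mul, Int.natAbs_mul, Int.natAbs_natCast] at this
        have hβlt : β.natAbs < p := by
          simp only [hβ, Int.natAbs_natCast]
          exact hval_lt_t
        have h1 : (a i * c' j - a j * c' i).natAbs ≠ 0 := fun h0 =>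
          hm'ne (Int.natAbs_eq_zero.1 h0)
        have h2 : (a i * b j - a j * b i).natAbs ≠ 0 := fun h0 =>
          hne (Int.natAbs_eq_zero.1 h0)
        nlinarith [heq, hβlt, hle, Nat.pos_of_ne_zero h1, Nat.pos_of_ne_zero h2]
      exact ih a c' haK hc'K i j hm'ne hm'le

lemma Ksub_modp_pair (A : Matrix (Fin r) (Fin n) ℤ) (T : Finset (Fin n)) (hT : r + 2 ≤ T.card)
    (p : ℕ) [Fact p.Prime] :
    ∃ x y, x ∈ Ksub A T ∧ y ∈ Ksub A T ∧
      LinearIndependent (ZMod p) ![redp p x, redp p y] := by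
  obtain ⟨a, b, haK, hbK, i, j, h⟩ := Ksub_pair A T hT
  exact descend A T p (a i * b j - a j * b i).natAbs a b haK hbK i j h le_rfl

lemma perp (A : Matrix (Fin r) (Fin n) ℤ) (T : Finset (Fin n)) (hT : r + 2 ≤ T.card)
    (p : ℕ) [hp : Fact p.Prime] :
    ∀ v ∈ Ksub A T, ∃ s ∈ (⨆ i ∈ T, Ksub A (T.erase i)), ∃ k ∈ Ksub A T,
      v = s + (p:ℤ) • k := by
  classical
  set R := ZMod p
  set K := Ksub A T with hK
  set Sz : Submodule ℤ (Fin n → ℤ) := ⨆ i ∈ T, Ksub A (T.erase i) with hSz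
  have hSzK : Sz ≤ K := iSup₂_le fun i _ => Ksub_erase_le
  set Kb : Submodule R (Fin n → R) := Submodule.span R (redp p '' (K : Set _)) with hKb
  set Wi : Fin n → Submodule R (Fin n → R) :=
    fun i => Submodule.span R (redp p '' ((Ksub A (T.erase i) : Submodule ℤ _) : Set _)) with hWi
  set W : Submodule R (Fin n → R) := ⨆ i ∈ T, Wi i with hW
  -- splittings
  choose u huK husplit using fun i => Ksub_split A T i
  have hKb_le : ∀ i, Kb ≤ (Submodule.span R {redp p (u i)}) ⊔ Wi i := by
    intro i
    rw [hKb]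
    rw [Submodule.span_le]
    rintro _ ⟨k, hk, rfl⟩
    obtain ⟨c, hck⟩ := husplit i k hk
    have hdecomp : redp p k = (c : R) • redp p (u i) + redp p (k - c • u i) := by
      rw [← redp_cast_smul, ← map_smul, ← map_add]
      congr 1
      abel
    rw [hdecomp]
    exact Submodule.add_mem _
      (Submodule.mem_sup_left (Submodule.smul_mem _ _ (Submodule.mem_span_singleton_self _)))
      (Submodule.mem_sup_right (Submodule.subset_span ⟨_, hck, rfl⟩))
  have hWi_le_Kb : ∀ i, Wi i ≤ Kb := fun i =>
    Submodule.span_mono (Set.image_mono (fun x hx => Ksub_erase_le hx))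
  have hW_le_Kb : W ≤ Kb := iSup₂_le fun i _ => hWi_le_Kb i
  by_cases hWKb : W = Kb
  · -- extraction
    intro v hv
    set Mσ : Submodule R (Fin n → R) :=
      { carrier := redp p '' (Sz : Set _)
        add_mem' := by
          rintro _ _ ⟨x, hx, rfl⟩ ⟨y, hy, rfl⟩
          exact ⟨x + y, Sz.add_mem hx hy, map_add _ _ _⟩
        zero_mem' := ⟨0, Sz.zero_mem, map_zero _⟩
        smul_mem' := by
          rintro c _ ⟨x, hx, rfl⟩
          obtain ⟨cz, rfl⟩ := ZMod.intCast_surjective c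
          exact ⟨cz • x, Sz.smul_mem cz hx, by rw [map_smul, redp_cast_smul]⟩ } with hMσ
    have hWM : W ≤ Mσ := by
      refine iSup₂_le fun i hi => ?_
      rw [hWi]
      rw [Submodule.span_le]
      rintro _ ⟨x, hx, rfl⟩
      have hxSz : x ∈ Sz := by
        have hle : Ksub A (T.erase i) ≤ Sz := by
          rw [hSz]
          exact le_iSup₂ (f := fun i (_ : i ∈ T) => Ksub A (T.erase i)) i hi
        exact hle hx
      exact ⟨x, hxSz, rfl⟩
    have hvKb : redp p v ∈ Kb := Submodule.subset_span ⟨v, hv, rfl⟩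
    rw [← hWKb] at hvKb
    obtain ⟨s, hsSz, hsv⟩ := hWM hvKb
    have hdiff : ∀ i', (p:ℤ) ∣ (v - s) i' := by
      intro i'
      have : redp p (v - s) = 0 := by rw [map_sub, hsv, sub_self]
      have h2 := congrFun this i'
      rwa [← ZMod.intCast_zmod_eq_zero_iff_dvd]
    set k : Fin n → ℤ := fun i' => (v - s) i' / (p:ℤ) with hk2
    have hvk : v - s = (p:ℤ) • k := by
      funext i'
      simp only [Pi.smul_apply, smul_eq_mul, hk2]
      rw [Int.mul_ediv_cancel' (hdiff i')]
    have hppos : (p:ℤ) ≠ 0 := by exact_mod_cast hp.1.ne_zero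
    have hkK : k ∈ K := Ksub_sat hppos (by rw [← hvk]; exact K.sub_mem hv (hSzK hsSz))
    exact ⟨s, hsSz, k, hkK, by rw [← hvk]; abel⟩
  · -- dimension contradiction
    exfalso
    have hlt : W < Kb := lt_of_le_of_ne hW_le_Kb hWKb
    have hrWrK : finrank R W < finrank R Kb := Submodule.finrank_lt_finrank_of_lt hlt
    have hTpos : 0 < T.card := by omega
    obtain ⟨i0, hi0⟩ := Finset.card_pos.1 hTpos
    have hrank1 : ∀ i ∈ T, finrank R Kb ≤ 1 + finrank R (Wi i) := by
      intro i _
      have h1 := hKb_le i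
      have h2 : finrank R Kb ≤ finrank R ↥((Submodule.span R {redp p (u i)}) ⊔ Wi i) :=
        Submodule.finrank_mono h1
      refine h2.trans ((Submodule.finrank_add_le_finrank_add_finrank _ _).trans ?_)
      have h3 : finrank R (Submodule.span R ({redp p (u i)} : Set _)) ≤ 1 := by
        refine (finrank_span_le_card _).trans ?_
        simp
      exact add_le_add h3 le_rfl
    have hWeq : ∀ i ∈ T, Wi i = W := by
      intro i hi
      have hle : Wi i ≤ W := le_iSup₂ (f := fun i (_ : i ∈ T) => Wi i) i hi
      refine Submodule.eq_of_le_of_finrank_le hle ?_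
      have := hrank1 i hi
      have h4 : finrank R (Wi i) ≤ finrank R W := Submodule.finrank_mono hle
      omega
    have hWzero : W = ⊥ := by
      rw [Submodule.eq_bot_iff]
      intro w hw
      funext i'
      by_cases hi' : i' ∈ T
      · have := hWeq i' hi' ▸ hw
        have hker : Wi i' ≤ LinearMap.ker (LinearMap.proj i' :
            (Fin n → R) →ₗ[R] R) := by
          rw [hWi]
          rw [Submodule.span_le]
          rintro _ ⟨x, hx, rfl⟩
          have : x i' = 0 := hx.2 i' (Finset.notMem_erase i' T)
          simp [LinearMap.mem_ker, redp, this]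
        exact hker this
      · have hwKb := hW_le_Kb hw
        have hker : Kb ≤ LinearMap.ker (LinearMap.proj i' : (Fin n → R) →ₗ[R] R) := by
          rw [hKb]
          rw [Submodule.span_le]
          rintro _ ⟨x, hx, rfl⟩
          have : x i' = 0 := hx.2 i' hi'
          simp [LinearMap.mem_ker, redp, this]
        exact hker hwKb
    have hrK1 : finrank R Kb ≤ 1 := by
      have := hrank1 i0 hi0
      rw [hWeq i0 hi0, hWzero] at this
      simpa using this
    obtain ⟨x, y, hxK, hyK, hli⟩ := Ksub_modp_pair A T hT p
    have hxKb : redp p x ∈ Kb := Submodule.subset_span ⟨x, hxK, rfl⟩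
    have hyKb : redp p y ∈ Kb := Submodule.subset_span ⟨y, hyK, rfl⟩
    have hli2 : LinearIndependent R (fun t : Fin 2 =>
        (![⟨redp p x, hxKb⟩, ⟨redp p y, hyKb⟩] : Fin 2 → Kb) t) := by
      apply LinearIndependent.of_comp Kb.subtype
      convert hli using 1
      funext t
      fin_cases t <;> rfl
    have h2rK := hli2.fintype_card_le_finrank
    simp only [Fintype.card_fin] at h2rK
    omega

lemma crux (A : Matrix (Fin r) (Fin n) ℤ) (T : Finset (Fin n)) (hT : r + 2 ≤ T.card) :
    Ksub A T ≤ ⨆ i ∈ T, Ksub A (T.erase i) := by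
  classical
  set Sz : Submodule ℤ (Fin n → ℤ) := ⨆ i ∈ T, Ksub A (T.erase i) with hSz
  have hTpos : 0 < T.card := by omega
  obtain ⟨i0, hi0⟩ := Finset.card_pos.1 hTpos
  have hSzI0 : Ksub A (T.erase i0) ≤ Sz := by
    rw [hSz]
    exact le_iSup₂ (f := fun i (_ : i ∈ T) => Ksub A (T.erase i)) i0 hi0
  obtain ⟨u, huK, husplit⟩ := Ksub_split A T i0
  set J : Submodule ℤ ℤ := Submodule.comap (LinearMap.toSpanSingleton ℤ _ u) Sz with hJ
  suffices h1 : (1:ℤ) ∈ J by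
    intro k hk
    obtain ⟨c, hc⟩ := husplit k hk
    have hu : u ∈ Sz := by
      have : (1:ℤ) • u ∈ Sz := h1
      rwa [one_smul] at this
    have hkeq : k = (k - c • u) + c • u := by abel
    rw [hkeq]
    exact Sz.add_mem (hSzI0 hc) (Sz.smul_mem c hu)
  by_contra h1
  have hprin : J.IsPrincipal := inferInstance
  set e : ℤ := Submodule.IsPrincipal.generator J with he
  have hmemJ : ∀ x : ℤ, x ∈ J ↔ e ∣ x := by
    intro x
    rw [← Submodule.IsPrincipal.span_singleton_generator J, Submodule.mem_span_singleton]
    constructor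
    · rintro ⟨a, rfl⟩; exact Dvd.intro _ (by rw [smul_eq_mul, mul_comm])
    · rintro ⟨a, rfl⟩; exact ⟨a, by rw [smul_eq_mul, mul_comm]⟩
  have hena : e.natAbs ≠ 1 := by
    intro hna
    apply h1
    rw [hmemJ]
    rcases Int.natAbs_eq e with h | h
    · rw [h, hna]; norm_num
    · rw [h, hna]; norm_num
  obtain ⟨p, hp, hpe⟩ := Int.exists_prime_and_dvd hena
  set q : ℕ := p.natAbs with hq
  have hqprime : q.Prime := Int.prime_iff_natAbs_prime.1 hp
  haveI : Fact q.Prime := ⟨hqprime⟩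
  obtain ⟨s, hsSz, k, hkK, hvk⟩ := perp A T hT q u huK
  obtain ⟨c, hc⟩ := husplit k hkK
  have hmem : (1 - (q:ℤ)*c) • u ∈ Sz := by
    have h2 : (1 - (q:ℤ)*c) • u = s + (q:ℤ) • (k - c • u) := by
      rw [hvk]
      module
    rw [h2]
    exact Sz.add_mem hsSz (Sz.smul_mem _ (hSzI0 hc))
  have hJmem : (1 - (q:ℤ)*c) ∈ J := hmem
  have hedvd : e ∣ (1 - (q:ℤ)*c) := (hmemJ _).1 hJmem
  have hpdvd : p ∣ (1 - (q:ℤ)*c) := dvd_trans hpe hedvd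
  have hpq : p ∣ (q:ℤ) := Int.dvd_natAbs.2 dvd_rfl
  have hp1 : p ∣ 1 := by
    have : (1:ℤ) = (1 - (q:ℤ)*c) + (q:ℤ)*c := by ring
    rw [this]
    exact dvd_add hpdvd (Dvd.dvd.mul_right hpq c)
  exact hp.not_dvd_one hp1

theorem stmt_1 (r n : ℕ) (hrn : r < n) (A : Matrix (Fin r) (Fin n) ℤ)
    (hsurj : Function.Surjective A.mulVec) :
    ∀ v : Fin n → ℤ, A.mulVec v = 0 →
      v ∈ AddSubgroup.closure {w : Fin n → ℤ | A.mulVec w = 0 ∧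
        (Finset.univ.filter fun i => w i ≠ 0).card ≤ r + 1} := by
  intro v hv
  set gens : Set (Fin n → ℤ) := {w : Fin n → ℤ | A.mulVec w = 0 ∧
      (Finset.univ.filter fun i => w i ≠ 0).card ≤ r + 1} with hgens
  suffices h : ∀ s : ℕ, ∀ v : Fin n → ℤ, A.mulVec v = 0 →
      (Finset.univ.filter fun i => v i ≠ 0).card ≤ s → v ∈ Submodule.span ℤ gens by
    have hm := h n v hv (le_trans (Finset.card_filter_le _ _) (by simp))
    rw [← Submodule.span_int_eq_addSubgroupClosure]
    exact hm
  intro s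
  induction s with
  | zero =>
    intro v hv hc
    exact Submodule.subset_span ⟨hv, le_trans hc (by omega)⟩
  | succ s ih =>
    intro v hv hc
    by_cases hsmall : (Finset.univ.filter fun i => v i ≠ 0).card ≤ r + 1
    · exact Submodule.subset_span ⟨hv, hsmall⟩
    · set T := Finset.univ.filter (fun i => v i ≠ 0) with hTdef
      have hvK : v ∈ Ksub A T := by
        refine ⟨hv, fun i hi => ?_⟩
        by_contra hne
        exact hi (Finset.mem_filter.2 ⟨Finset.mem_univ i, hne⟩)
      have hT : r + 2 ≤ T.card := by omega
      have h2 := crux A T hT hvK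
      have h3 : (⨆ i ∈ T, Ksub A (T.erase i)) ≤ Submodule.span ℤ gens := by
        refine iSup₂_le fun i hi => ?_
        intro w hw
        apply ih w hw.1
        have hsub : (Finset.univ.filter fun j => w j ≠ 0) ⊆ T.erase i := by
          intro j hj
          by_contra hj'
          exact (Finset.mem_filter.1 hj).2 (hw.2 j hj')
        have := Finset.card_le_card hsub
        rw [Finset.card_erase_of_mem hi] at this
        omega
      exact h3 h2
end

section
/- Let A be an r × n integer matrix with columns m_1, ..., m_n, let L = ker_Z(A) ∩ N^n be the semigroup of exponent vectors of monomial invariants, and let S ⊆ L be a subsemigroup. Suppose that (i) for every subset I ⊆ {1,...,n}, every element of L supported in I lies in the subgroup of Z^n generated by the elements of S supported in I, and (ii) for every α ∈ L and every i with α_i ≠ 0, there exists γ ∈ S with γ_i ≠ 0 and supp(γ) ⊆ supp(α). Then for any field k and any two points u, v ∈ k^n: if there exists α ∈ L with u^α ≠ v^α (where u^α := ∏_i u_i^{α_i}), then there exists γ ∈ S with u^γ ≠ v^γ. -/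
theorem stmt_4 (k : Type*) [Field k] (r n : ℕ) (A : Matrix (Fin r) (Fin n) ℤ)
    (L S : Set (Fin n → ℕ))
    (hL : L = {α | A.mulVec (fun i => (α i : ℤ)) = 0})
    (hSL : S ⊆ L)
    (hSadd : ∀ a ∈ S, ∀ b ∈ S, a + b ∈ S)
    (h1 : ∀ I : Set (Fin n), ∀ α ∈ L, (∀ i ∉ I, α i = 0) →
      (fun i => (α i : ℤ)) ∈ AddSubgroup.closure
        ((fun γ : Fin n → ℕ => fun i => (γ i : ℤ)) '' {γ ∈ S | ∀ i ∉ I, γ i = 0}))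
    (h2 : ∀ α ∈ L, ∀ i, α i ≠ 0 → ∃ γ ∈ S, γ i ≠ 0 ∧ ∀ j, γ j ≠ 0 → α j ≠ 0)
    (u v : Fin n → k)
    (hsep : ∃ α ∈ L, (∏ i, u i ^ α i) ≠ ∏ i, v i ^ α i) :
    ∃ γ ∈ S, (∏ i, u i ^ γ i) ≠ ∏ i, v i ^ γ i := by
  classical
  by_contra hcon
  push_neg at hcon
  obtain ⟨α, hαL, hne⟩ := hsep
  -- helper: a vanishing coordinate kills the product
  have hzeroprod : ∀ (x : Fin n → k) (β : Fin n → ℕ) (j : Fin n), x j = 0 → β j ≠ 0 →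
      (∏ i, x i ^ β i) = 0 := by
    intro x β j hxj hβj
    exact Finset.prod_eq_zero (Finset.mem_univ j) (by rw [hxj]; exact zero_pow hβj)
  by_cases hz : ∀ i, α i ≠ 0 → u i ≠ 0 ∧ v i ≠ 0
  · -- all relevant coordinates are nonzero: use h1 and a character into kˣ
    set w : Fin n → kˣ := fun i =>
      if h : u i ≠ 0 ∧ v i ≠ 0 then Units.mk0 (u i) h.1 * (Units.mk0 (v i) h.2)⁻¹ else 1
      with hw
    have hprodval : ∀ γ : Fin n → ℕ, (∀ j, γ j ≠ 0 → u j ≠ 0 ∧ v j ≠ 0) →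
        ((∏ i, w i ^ (γ i : ℤ) : kˣ) : k) = (∏ i, u i ^ γ i) * (∏ i, v i ^ γ i)⁻¹ := by
      intro γ hγ
      rw [Units.coe_prod, ← Finset.prod_inv_distrib, ← Finset.prod_mul_distrib]
      refine Finset.prod_congr rfl fun i _ => ?_
      by_cases hi : γ i = 0
      · simp [hi]
      · obtain ⟨hu, hv⟩ := hγ i hi
        simp only [hw]
        rw [dif_pos ⟨hu, hv⟩]
        push_cast
        rw [zpow_natCast, mul_pow, inv_pow]
        simp
    have hvne : ∀ γ : Fin n → ℕ, (∀ j, γ j ≠ 0 → v j ≠ 0) → (∏ i, v i ^ γ i) ≠ 0 := by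
      intro γ hγ
      refine Finset.prod_ne_zero_iff.2 fun i _ => ?_
      by_cases hi : γ i = 0
      · simp [hi]
      · exact pow_ne_zero _ (hγ i hi)
    have hker : ∀ γ : Fin n → ℕ, (∀ j, γ j ≠ 0 → u j ≠ 0 ∧ v j ≠ 0) →
        (∏ i, u i ^ γ i) = (∏ i, v i ^ γ i) → (∏ i, w i ^ (γ i : ℤ) : kˣ) = 1 := by
      intro γ hγ heq
      apply Units.ext
      rw [Units.val_one, hprodval γ hγ, heq]
      exact mul_inv_cancel₀ (hvne γ fun j hj => (hγ j hj).2)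
    let φ : (Fin n → ℤ) →+ Additive kˣ :=
      { toFun := fun β => Additive.ofMul (∏ i, w i ^ β i)
        map_zero' := by simp
        map_add' := by
          intro a b
          simp only [Pi.add_apply, zpow_add]
          rw [Finset.prod_mul_distrib]
          rfl }
    have hmem := h1 {i | α i ≠ 0} α hαL (fun i hi => not_not.mp hi)
    have hsub : AddSubgroup.closure
        ((fun γ : Fin n → ℕ => fun i => (γ i : ℤ)) ''
          {γ ∈ S | ∀ i ∉ {i | α i ≠ 0}, γ i = 0}) ≤ φ.ker := by
      rw [AddSubgroup.closure_le]
      rintro _ ⟨γ, ⟨hγS, hγsupp⟩, rfl⟩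
      simp only [SetLike.mem_coe, AddMonoidHom.mem_ker]
      have hγsub : ∀ j, γ j ≠ 0 → u j ≠ 0 ∧ v j ≠ 0 := by
        intro j hj
        have : α j ≠ 0 := by
          by_contra h
          exact hj (hγsupp j (by simpa using h))
        exact hz j this
      show Additive.ofMul (∏ i, w i ^ ((γ i : ℤ))) = 0
      rw [hker γ hγsub (hcon γ hγS)]
      rfl
    have hφα : φ (fun i => (α i : ℤ)) = 0 := hsub hmem
    have hone : (∏ i, w i ^ ((α i : ℤ)) : kˣ) = 1 := by
      have := hφα
      exact this
    have := congrArg Units.val hone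
    rw [Units.val_one, hprodval α hz] at this
    have hvα : (∏ i, v i ^ α i) ≠ 0 := hvne α fun j hj => (hz j hj).2
    exact hne (by field_simp at this; exact this)
  · push_neg at hz
    obtain ⟨i, hαi, hi⟩ := hz
    obtain ⟨γ, hγS, hγi, hγsupp⟩ := h2 α hαL i hαi
    have heqγ := hcon γ hγS
    by_cases hu : u i = 0
    · have huγ : (∏ j, u j ^ γ j) = 0 := hzeroprod u γ i hu hγi
      have hvγ : (∏ j, v j ^ γ j) = 0 := by rw [← heqγ]; exact huγ
      obtain ⟨j, -, hj⟩ := Finset.prod_eq_zero_iff.1 hvγ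
      have hγj : γ j ≠ 0 := by rintro h; rw [h, pow_zero] at hj; exact one_ne_zero hj
      have hvj : v j = 0 := by
        exact pow_eq_zero_iff hγj |>.1 hj
      have hαj : α j ≠ 0 := hγsupp j hγj
      exact hne (by rw [hzeroprod u α i hu hαi, hzeroprod v α j hvj hαj])
    · have hv : v i = 0 := hi hu
      have hvγ : (∏ j, v j ^ γ j) = 0 := hzeroprod v γ i hv hγi
      have huγ : (∏ j, u j ^ γ j) = 0 := by rw [heqγ]; exact hvγ
      obtain ⟨j, -, hj⟩ := Finset.prod_eq_zero_iff.1 huγ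
      have hγj : γ j ≠ 0 := by rintro h; rw [h, pow_zero] at hj; exact one_ne_zero hj
      have huj : u j = 0 := by
        exact pow_eq_zero_iff hγj |>.1 hj
      have hαj : α j ≠ 0 := hγsupp j hγj
      exact hne (by rw [hzeroprod u α j huj hαj, hzeroprod v α i hv hαi])
end

section
/- Let k be an algebraically closed field of characteristic zero, let L ⊆ N^n be a subsemigroup, and let S ⊆ L be a subsemigroup. Suppose there exist two distinct primes p and q and an integer m ≥ 1 such that p^m · L ⊆ S and q^m · L ⊆ S. Then S is separating for L: for any u, v ∈ k^n, if there exists α ∈ L with u^α ≠ v^α, then there exists γ ∈ S with u^γ ≠ v^γ. -/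
theorem stmt_6 (k : Type*) [Field k] [IsAlgClosed k] [CharZero k]
    (n : ℕ) (L S : Set (Fin n → ℕ)) (hSL : S ⊆ L)
    (hLadd : ∀ a ∈ L, ∀ b ∈ L, a + b ∈ L)
    (hSadd : ∀ a ∈ S, ∀ b ∈ S, a + b ∈ S)
    (p q : ℕ) (hp : p.Prime) (hq : q.Prime) (hpq : p ≠ q)
    (m : ℕ) (hm : 1 ≤ m)
    (hpL : ∀ α ∈ L, (fun i => p ^ m * α i) ∈ S)
    (hqL : ∀ α ∈ L, (fun i => q ^ m * α i) ∈ S)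
    (u v : Fin n → k)
    (hsep : ∃ α ∈ L, (∏ i, u i ^ α i) ≠ ∏ i, v i ^ α i) :
    ∃ γ ∈ S, (∏ i, u i ^ γ i) ≠ ∏ i, v i ^ γ i := by

  obtain ⟨α, hαL, hne⟩ := hsep
  by_contra hcon
  push_neg at hcon
  have h1 := hcon _ (hpL α hαL)
  have h2 := hcon _ (hqL α hαL)
  simp_rw [pow_mul', Finset.prod_pow] at h1 h2
  apply hne
  by_cases hB : (∏ i, v i ^ α i) = 0
  · have hPm : p ^ m ≠ 0 := pow_ne_zero m hp.ne_zero
    have : (∏ i, u i ^ α i) ^ p ^ m = 0 := by rw [h1, hB, zero_pow hPm]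
    rw [hB]
    exact pow_eq_zero_iff hPm |>.mp this
  · set t := (∏ i, u i ^ α i) / (∏ i, v i ^ α i) with ht
    have ht1 : t ^ p ^ m = 1 := by
      rw [ht, div_pow, h1, div_self (pow_ne_zero _ hB)]
    have ht2 : t ^ q ^ m = 1 := by
      rw [ht, div_pow, h2, div_self (pow_ne_zero _ hB)]
    have hcop : Nat.Coprime (p ^ m) (q ^ m) :=
      ((Nat.coprime_primes hp hq).mpr hpq).pow m m
    have hd := Nat.dvd_gcd (orderOf_dvd_of_pow_eq_one ht1) (orderOf_dvd_of_pow_eq_one ht2)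
    rw [hcop] at hd
    have ht' : t = 1 := orderOf_eq_one_iff.mp (Nat.dvd_one.mp hd)
    exact (div_eq_one_iff_eq hB).mp ht'
end

section
/- Let A be an r × n integer matrix of rank r with columns m_1, ..., m_r, let L = ker_Z(A) ∩ N^n, and suppose α ∈ L with α_{i_0} ≠ 0 and |supp(α)| > r + 1. Then there exists γ ∈ L with γ_{i_0} ≠ 0, supp(γ) ⊆ supp(α), and |supp(γ)| ≤ r + 2. -/
lemma exists_rel (r n : ℕ) (A : Matrix (Fin r) (Fin n) ℤ) (T : Finset (Fin n))
    (hT : r < T.card) :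
    ∃ b : Fin n → ℤ, b ≠ 0 ∧ (∀ j, b j ≠ 0 → j ∈ T) ∧ A.mulVec b = 0 := by
  have hfin : Module.finrank ℤ (Fin r → ℤ) = r := by simp [Module.finrank_pi]
  have hnli : ¬ LinearIndependent ℤ (fun i : T => (fun k => A k i : Fin r → ℤ)) := by
    intro h
    have := h.fintype_card_le_finrank
    rw [hfin, Fintype.card_coe] at this
    omega
  rw [Fintype.not_linearIndependent_iff] at hnli
  obtain ⟨g, hg, i, hgi⟩ := hnli
  refine ⟨fun j => if h : j ∈ T then g ⟨j, h⟩ else 0, ?_, ?_, ?_⟩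
  · intro h
    apply hgi
    have := congrFun h i
    simpa using this
  · intro j hj
    by_contra h
    simp [h] at hj
  · funext k
    have := congrFun hg k
    simp only [Finset.sum_apply, Pi.smul_apply, Pi.zero_apply, smul_eq_mul] at this
    rw [Matrix.mulVec, dotProduct]
    simp only [Pi.zero_apply]
    rw [← Finset.sum_subset (Finset.subset_univ T)]
    · rw [← this, ← Finset.sum_attach T]
      apply Finset.sum_congr rfl
      intro j _
      simp [j.2, mul_comm]
    · intro j _ hj
      simp [hj]

lemma step (r n : ℕ) (A : Matrix (Fin r) (Fin n) ℤ)
    (α : Fin n → ℕ) (hα : A.mulVec (fun i => (α i : ℤ)) = 0)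
    (i0 : Fin n) (hi0 : α i0 ≠ 0)
    (hs : r + 2 < (Finset.univ.filter fun i => α i ≠ 0).card) :
    ∃ α' : Fin n → ℕ, A.mulVec (fun i => (α' i : ℤ)) = 0 ∧ α' i0 ≠ 0 ∧
      (∀ i, α' i ≠ 0 → α i ≠ 0) ∧
      (Finset.univ.filter fun i => α' i ≠ 0).card <
        (Finset.univ.filter fun i => α i ≠ 0).card := by
  set S := (Finset.univ.filter fun i => α i ≠ 0).erase i0 with hS
  have hi0mem : i0 ∈ Finset.univ.filter fun i => α i ≠ 0 := by simp [hi0]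
  have hScard : r < S.card := by
    rw [hS, Finset.card_erase_of_mem hi0mem]; omega
  obtain ⟨b0, hb0ne, hb0supp, hb0ker⟩ := exists_rel r n A S hScard
  -- get b with a negative entry
  have key : ∀ b : Fin n → ℤ, (∀ j, b j ≠ 0 → j ∈ S) → A.mulVec b = 0 →
      ∀ j', b j' < 0 → ∃ α' : Fin n → ℕ, A.mulVec (fun i => (α' i : ℤ)) = 0 ∧ α' i0 ≠ 0 ∧
      (∀ i, α' i ≠ 0 → α i ≠ 0) ∧
      (Finset.univ.filter fun i => α' i ≠ 0).card <
        (Finset.univ.filter fun i => α i ≠ 0).card := by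
    intro b hbsupp hbker j' hj'
    set N := Finset.univ.filter fun i => b i < 0 with hN
    have hNne : N.Nonempty := ⟨j', by simp [hN, hj']⟩
    obtain ⟨i₁, hi₁mem, hi₁min⟩ := N.exists_min_image (fun i => (α i : ℚ) / (-(b i))) hNne
    have hbi₁ : b i₁ < 0 := by simpa [hN] using hi₁mem
    set c : Fin n → ℤ := fun j => (-(b i₁)) * (α j) + (α i₁) * b j with hc
    have hcnn : ∀ j, 0 ≤ c j := by
      intro j
      by_cases hbj : b j < 0
      · have hmin := hi₁min j (by simp [hN, hbj])
        have h1 : (0:ℚ) < -(b i₁) := by exact_mod_cast neg_pos.mpr hbi₁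
        have h2 : (0:ℚ) < -(b j) := by exact_mod_cast neg_pos.mpr hbj
        rw [div_le_div_iff₀ h1 h2] at hmin
        have : (α i₁ : ℤ) * (-(b j)) ≤ (α j : ℤ) * (-(b i₁)) := by exact_mod_cast hmin
        simp only [hc]
        nlinarith
      · push_neg at hbj
        have h1 : (0:ℤ) ≤ -(b i₁) := by omega
        positivity
    have hci₁ : c i₁ = 0 := by simp [hc]; ring
    have hbi0 : b i0 = 0 := by
      by_contra h
      have := hbsupp i0 h
      simp [hS] at this
    -- kernel
    have hcker : A.mulVec c = 0 := by
      have : c = (-(b i₁)) • (fun i => (α i : ℤ)) + ((α i₁ : ℤ)) • b := by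
        funext j; simp [hc, mul_comm]
      rw [this, Matrix.mulVec_add, Matrix.mulVec_smul, Matrix.mulVec_smul, hα, hbker]
      simp
    refine ⟨fun j => (c j).toNat, ?_, ?_, ?_, ?_⟩
    · have : (fun i => (((c i).toNat : ℤ))) = c := by
        funext j; exact Int.toNat_of_nonneg (hcnn j)
      rw [this, hcker]
    · have : c i0 = (-(b i₁)) * (α i0) := by simp [hc, hbi0]
      have hpos : 0 < c i0 := by
        rw [this]
        have : 0 < (α i0 : ℤ) := by exact_mod_cast Nat.pos_of_ne_zero hi0
        nlinarith
      simp only [ne_eq, Int.toNat_eq_zero, not_le]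
      omega
    · intro i hci
      have hcine : c i ≠ 0 := by
        intro h; apply hci; simp [h]
      by_contra hαi
      have hbi : b i ≠ 0 := by
        intro h
        apply hcine
        simp [hc, h, hαi]
      have := hbsupp i hbi
      rw [hS] at this
      simp [hαi] at this
    · apply lt_of_le_of_lt (Finset.card_le_card (t := (Finset.univ.filter fun i => α i ≠ 0).erase i₁) ?_)
      · rw [Finset.card_erase_of_mem]
        · omega
        · have hbi : b i₁ ≠ 0 := by omega
          exact Finset.mem_of_mem_erase (hbsupp i₁ hbi)
      · intro j hj
        simp only [Finset.mem_filter, Finset.mem_univ, true_and, ne_eq] at hj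
        have hcj : c j ≠ 0 := by
          intro h; apply hj; simp [h]
        have hjne : j ≠ i₁ := by
          intro h; rw [h, hci₁] at hcj; exact hcj rfl
        have hαj : α j ≠ 0 := by
          by_contra hαj
          have hbj : b j ≠ 0 := by
            intro h; apply hcj; simp [hc, h, hαj]
          have := hbsupp j hbj
          rw [hS] at this
          simp [hαj] at this
        exact Finset.mem_erase.mpr ⟨hjne, by simp [hαj]⟩
  by_cases hneg : ∃ j, b0 j < 0
  · obtain ⟨j, hj⟩ := hneg
    exact key b0 hb0supp hb0ker j hj
  · push_neg at hneg
    have hex : ∃ j, b0 j ≠ 0 := by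
      by_contra h
      push_neg at h
      exact hb0ne (funext fun j => h j)
    obtain ⟨j, hj⟩ := hex
    refine key (-b0) (fun i hi => hb0supp i (by simpa using hi)) (by rw [Matrix.mulVec_neg, hb0ker, neg_zero]) j ?_
    have := hneg j
    simp only [Pi.neg_apply]
    omega

lemma main_aux (r n : ℕ) (A : Matrix (Fin r) (Fin n) ℤ) (i0 : Fin n) :
    ∀ k (α : Fin n → ℕ), A.mulVec (fun i => (α i : ℤ)) = 0 → α i0 ≠ 0 →
      (Finset.univ.filter fun i => α i ≠ 0).card ≤ k →
    ∃ γ : Fin n → ℕ, A.mulVec (fun i => (γ i : ℤ)) = 0 ∧ γ i0 ≠ 0 ∧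
      (∀ i, γ i ≠ 0 → α i ≠ 0) ∧
      (Finset.univ.filter fun i => γ i ≠ 0).card ≤ r + 2 := by
  intro k
  induction k with
  | zero =>
    intro α hα hi0 hcard
    exact ⟨α, hα, hi0, fun i h => h, by omega⟩
  | succ m ih =>
    intro α hα hi0 hcard
    by_cases hle : (Finset.univ.filter fun i => α i ≠ 0).card ≤ r + 2
    · exact ⟨α, hα, hi0, fun i h => h, hle⟩
    · push_neg at hle
      obtain ⟨α', hα', hi0', hsupp', hlt⟩ := step r n A α hα i0 hi0 hle
      obtain ⟨γ, h1, h2, h3, h4⟩ := ih α' hα' hi0' (by omega)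
      exact ⟨γ, h1, h2, fun i h => hsupp' i (h3 i h), h4⟩

theorem stmt_7 (r n : ℕ) (A : Matrix (Fin r) (Fin n) ℤ) (hrank : A.rank = r)
    (α : Fin n → ℕ) (hα : A.mulVec (fun i => (α i : ℤ)) = 0)
    (i0 : Fin n) (hi0 : α i0 ≠ 0)
    (hsupp : r + 1 < (Finset.univ.filter fun i => α i ≠ 0).card) :
    ∃ γ : Fin n → ℕ, A.mulVec (fun i => (γ i : ℤ)) = 0 ∧ γ i0 ≠ 0 ∧
      (∀ i, γ i ≠ 0 → α i ≠ 0) ∧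
      (Finset.univ.filter fun i => γ i ≠ 0).card ≤ r + 2 :=
  main_aux r n A i0 _ α hα hi0 le_rfl
end

section
/- Graph-closure membership for disjoint nullcone components: Let m_1, ..., m_n ∈ Z^r be weights, let I, J ⊆ {1,...,n} be disjoint, and suppose there exists δ ∈ Z^r with δ · m_i > 0 for all i ∈ I and δ · m_j < 0 for all j ∈ J. For u supported in I and v supported in J (vectors in k^n over a field k), and for t ∈ k^×, define t ⋆ w = (t^{δ·m_1} w_1, ..., t^{δ·m_n} w_n). Then the map t ↦ (u + t^{-1} ⋆ v, t ⋆ u + v), defined for t ≠ 0, extends to a morphism of the affine line such that at t = 0 its value is (u, v). Consequently (u,v) lies in the Zariski closure of {(w, t ⋆ w) : w ∈ k^n, t ∈ k^×}. -/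
theorem stmt_14 (k : Type*) [Field k] [IsAlgClosed k] (r n : ℕ)
    (m : Fin n → Fin r → ℤ) (δ : Fin r → ℤ) (I J : Finset (Fin n))
    (hIJ : Disjoint I J)
    (hI : ∀ i ∈ I, 0 < ∑ jj, δ jj * m i jj)
    (hJ : ∀ j ∈ J, (∑ jj, δ jj * m j jj) < 0)
    (u v : Fin n → k)
    (hu : ∀ i, u i ≠ 0 → i ∈ I) (hv : ∀ i, v i ≠ 0 → i ∈ J) :
    let d : Fin n → ℤ := fun i => ∑ jj, δ jj * m i jj
    let F : k → (Fin n → k) × (Fin n → k) := fun t =>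
      (fun i => u i + t ^ (-(d i)).toNat * v i, fun i => t ^ (d i).toNat * u i + v i)
    (∀ t : k, t ≠ 0 → ∀ i, (F t).2 i = t ^ (d i) * (F t).1 i) ∧
    F 0 = (u, v) ∧
    (∀ P : MvPolynomial (Fin n ⊕ Fin n) k,
      (∀ (w : Fin n → k) (t : k), t ≠ 0 →
        MvPolynomial.eval (Sum.elim w (fun i => t ^ (d i) * w i)) P = 0) →
      MvPolynomial.eval (Sum.elim u v) P = 0) := by
  intro d F
  have huv : ∀ i, i ∈ I → v i = 0 := fun i hi => by
    by_contra h; exact (Finset.disjoint_left.mp hIJ hi (hv i h)).elim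
  have hvu : ∀ i, i ∈ J → u i = 0 := fun i hi => by
    by_contra h; exact (Finset.disjoint_left.mp (Disjoint.symm hIJ) hi (hu i h)).elim
  have key : ∀ t : k, t ≠ 0 → ∀ i, (F t).2 i = t ^ (d i) * (F t).1 i := by
    intro t ht i
    show t ^ (d i).toNat * u i + v i = t ^ (d i) * (u i + t ^ (-(d i)).toNat * v i)
    by_cases hiI : i ∈ I
    · have hd : 0 < d i := hI i hiI
      have hv0 : v i = 0 := huv i hiI
      have h1 : (-(d i)).toNat = 0 := Int.toNat_of_nonpos (by omega)
      have h2 : t ^ (d i) = t ^ (d i).toNat := by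
        rw [← zpow_natCast, Int.toNat_of_nonneg hd.le]
      rw [hv0, h1, h2]; ring
    · by_cases hiJ : i ∈ J
      · have hd : d i < 0 := hJ i hiJ
        have hu0 : u i = 0 := hvu i hiJ
        have h1 : (d i).toNat = 0 := Int.toNat_of_nonpos hd.le
        have h2 : t ^ (d i) * t ^ (-(d i)).toNat = 1 := by
          rw [← zpow_natCast, Int.toNat_of_nonneg (by omega : (0:ℤ) ≤ -(d i)),
            ← zpow_add₀ ht, add_neg_cancel, zpow_zero]
        rw [hu0, h1]
        calc t ^ (0:ℕ) * 0 + v i = v i := by ring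
          _ = t ^ (d i) * t ^ (-(d i)).toNat * v i := by rw [h2, one_mul]
          _ = t ^ (d i) * (0 + t ^ (-(d i)).toNat * v i) := by ring
      · have hu0 : u i = 0 := by by_contra h; exact hiI (hu i h)
        have hv0 : v i = 0 := by by_contra h; exact hiJ (hv i h)
        rw [hu0, hv0]; ring
  have hF01 : ∀ i, u i + (0:k) ^ (-(d i)).toNat * v i = u i := by
    intro i
    by_cases h : v i = 0
    · simp [h]
    · have hd : d i < 0 := hJ i (hv i h)
      have : (-(d i)).toNat ≠ 0 := by omega
      simp [zero_pow this]
  have hF02 : ∀ i, (0:k) ^ (d i).toNat * u i + v i = v i := by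
    intro i
    by_cases h : u i = 0
    · simp [h]
    · have hd : 0 < d i := hI i (hu i h)
      have : (d i).toNat ≠ 0 := by omega
      simp [zero_pow this]
  have hF0 : F 0 = (u, v) := by
    show ((fun i => u i + (0:k) ^ (-(d i)).toNat * v i),
      (fun i => (0:k) ^ (d i).toNat * u i + v i)) = (u, v)
    exact Prod.ext (funext hF01) (funext hF02)
  refine ⟨key, hF0, ?_⟩
  intro P hP
  set φ : (Fin n ⊕ Fin n) → Polynomial k := Sum.elim
    (fun i => Polynomial.C (u i) + Polynomial.X ^ (-(d i)).toNat * Polynomial.C (v i))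
    (fun i => Polynomial.X ^ (d i).toNat * Polynomial.C (u i) + Polynomial.C (v i)) with hφ
  set q : Polynomial k := MvPolynomial.aeval φ P with hq
  have heval : ∀ t : k, Polynomial.eval t q
      = MvPolynomial.eval (fun s => Polynomial.eval t (φ s)) P := by
    intro t
    have h := MvPolynomial.comp_aeval_apply (f := φ) (Polynomial.aeval t) P
    rw [hq, ← Polynomial.coe_aeval_eq_eval, h]
    rw [MvPolynomial.aeval_def, MvPolynomial.eval]
    simp [Polynomial.coe_aeval_eq_eval]
  have hq0 : q = 0 := by
    apply Polynomial.eq_zero_of_infinite_isRoot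
    apply Set.Infinite.mono (s := {t : k | t ≠ 0})
    · intro t ht
      have hw := hP ((F t).1) t ht
      have : (fun s => Polynomial.eval t (φ s))
          = Sum.elim ((F t).1) (fun i => t ^ (d i) * (F t).1 i) := by
        funext s
        cases s with
        | inl i =>
          simp only [hφ, Sum.elim_inl, Polynomial.eval_add, Polynomial.eval_mul,
            Polynomial.eval_pow, Polynomial.eval_C, Polynomial.eval_X]
          rfl
        | inr i =>
          have h := key t ht i
          simp only [hφ, Sum.elim_inr, Polynomial.eval_add, Polynomial.eval_mul,
            Polynomial.eval_pow, Polynomial.eval_C, Polynomial.eval_X]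
          exact h
      simp only [Polynomial.IsRoot, Set.mem_setOf_eq]
      rw [heval t, this, hw]
    · exact (Set.finite_singleton (0:k)).infinite_compl
  have h0 : Polynomial.eval 0 q = 0 := by rw [hq0]; simp
  rw [heval 0] at h0
  have : (fun s => Polynomial.eval 0 (φ s)) = Sum.elim u v := by
    funext s
    cases s with
    | inl i =>
      simp only [hφ, Sum.elim_inl, Polynomial.eval_add, Polynomial.eval_mul,
        Polynomial.eval_pow, Polynomial.eval_C, Polynomial.eval_X]
      exact hF01 i
    | inr i =>
      simp only [hφ, Sum.elim_inr, Polynomial.eval_add, Polynomial.eval_mul,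
        Polynomial.eval_pow, Polynomial.eval_C, Polynomial.eval_X]
      exact hF02 i
  rwa [this] at h0
end
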